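/- (Lemma 2.1) Let G be a finite simple graph, k ≥ 1, M a k-limited spanning subgraph of G with σ(M) ≠ 0, and P an M-augmenting trail in G. Then the spanning subgraph M' of G whose edge set is the symmetric difference E(M) Δ E(P) is again a k-limited spanning subgraph of G, and σ(M') = σ(M) − 2. -/

import Mathlib

open SimpleGraph

variable {V : Type*}

/-- The degree of a vertex `v` in a (sub)graph `M`. -/
noncomputable def mdeg (M : SimpleGraph V) (v : V) : ℕ := (M.neighborSet v).ncard

/-- `M` is a `k`-limited spanning subgraph of `G`: a subgraph on all the vertices of `G`
with all degrees at most `k`. -/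
def IsKLimitedSpanning (G M : SimpleGraph V) (k : ℕ) : Prop :=
  M ≤ G ∧ ∀ v : V, mdeg M v ≤ k

/-- `F` is a `k`-factor of `G`: a spanning subgraph all of whose degrees equal `k`. -/
def IsKFactor (G F : SimpleGraph V) (k : ℕ) : Prop :=
  F ≤ G ∧ ∀ v : V, mdeg F v = k

/-- The deficiency `σ(M) = ∑_{v} (k - deg_M v)`. -/
noncomputable def sigmaDef [Fintype V] (M : SimpleGraph V) (k : ℕ) : ℕ :=
  ∑ v : V, (k - mdeg M v)

/-- An `M`-alternating trail: a trail whose consecutive edges alternate between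
membership and non-membership in `E(M)`. -/
def IsAltTrail {G : SimpleGraph V} (M : SimpleGraph V) {u v : V} (p : G.Walk u v) : Prop :=
  p.IsTrail ∧ ∀ (i : ℕ) (h : i + 1 < p.edges.length),
    ((p.edges[i]'(Nat.lt_of_succ_lt h)) ∈ M.edgeSet ↔ (p.edges[i+1]'h) ∉ M.edgeSet)

/-- An `M`-augmenting trail (with respect to the bound `k`): an `M`-alternating trail whose
first and last edges are not in `E(M)`, whose endpoints are unfilled in `M`, all of whose
inner vertex visits are filled in `M`, and which, if closed at `v₀ = u = v`, additionally
satisfies `deg_M v₀ < k - 1`. -/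
def IsAugTrail (G M : SimpleGraph V) (k : ℕ) {u v : V} (p : G.Walk u v) : Prop :=
  IsAltTrail M p ∧
  p.edges ≠ [] ∧
  (∀ e, p.edges.head? = some e → e ∉ M.edgeSet) ∧
  (∀ e, p.edges.getLast? = some e → e ∉ M.edgeSet) ∧
  mdeg M u < k ∧ mdeg M v < k ∧
  (∀ w ∈ p.support.tail.dropLast, mdeg M w = k) ∧
  (u = v → mdeg M u < k - 1)

section AuxCounting

open scoped Classical

/-- Sign of an edge: `+1` if not in `M`, `-1` if in `M`. -/
noncomputable def sgnM (M : SimpleGraph V) (e : Sym2 V) : ℤ :=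
  if e ∈ M.edgeSet then -1 else 1

/-- Signed count of edges of `l` incident to `v`. -/
noncomputable def tcnt (M : SimpleGraph V) (l : List (Sym2 V)) (v : V) : ℤ :=
  ({x | s(v,x) ∈ l ∧ s(v,x) ∉ M.edgeSet}.ncard : ℤ)
    - ({x | s(v,x) ∈ l ∧ s(v,x) ∈ M.edgeSet}.ncard : ℤ)

lemma cnt_cons_left [Fintype V] (Q : Sym2 V → Prop) (a b : V) (hab : a ≠ b)
    (l : List (Sym2 V)) (hel : s(a,b) ∉ l) :
    {x | s(a,x) ∈ (s(a,b) :: l) ∧ Q s(a,x)}.ncard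
      = {x | s(a,x) ∈ l ∧ Q s(a,x)}.ncard + (if Q s(a,b) then 1 else 0) := by
  by_cases hQ : Q s(a,b)
  · have hseteq : {x | s(a,x) ∈ (s(a,b) :: l) ∧ Q s(a,x)}
        = insert b {x | s(a,x) ∈ l ∧ Q s(a,x)} := by
      ext x
      simp only [Set.mem_insert_iff, Set.mem_setOf_eq, List.mem_cons]
      constructor
      · rintro ⟨h1 | h1, h2⟩
        · rcases Sym2.eq_iff.mp h1 with ⟨_, rfl⟩ | ⟨h, _⟩
          · exact Or.inl rfl
          · exact absurd h hab
        · exact Or.inr ⟨h1, h2⟩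
      · rintro (rfl | ⟨h1, h2⟩)
        · exact ⟨Or.inl rfl, hQ⟩
        · exact ⟨Or.inr h1, h2⟩
    rw [hseteq, Set.ncard_insert_of_notMem (fun h => hel h.1), if_pos hQ]
  · have hseteq : {x | s(a,x) ∈ (s(a,b) :: l) ∧ Q s(a,x)}
        = {x | s(a,x) ∈ l ∧ Q s(a,x)} := by
      ext x
      simp only [Set.mem_setOf_eq, List.mem_cons]
      constructor
      · rintro ⟨h1 | h1, h2⟩
        · rcases Sym2.eq_iff.mp h1 with ⟨_, rfl⟩ | ⟨h, _⟩
          · exact absurd (h1 ▸ h2) hQ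
          · exact absurd h hab
        · exact ⟨h1, h2⟩
      · rintro ⟨h1, h2⟩
        exact ⟨Or.inr h1, h2⟩
    rw [hseteq, if_neg hQ, Nat.add_zero]

lemma cnt_cons_notmem (Q : Sym2 V → Prop) (a b v : V) (hva : v ≠ a) (hvb : v ≠ b)
    (l : List (Sym2 V)) :
    {x | s(v,x) ∈ (s(a,b) :: l) ∧ Q s(v,x)} = {x | s(v,x) ∈ l ∧ Q s(v,x)} := by
  ext x
  simp only [Set.mem_setOf_eq, List.mem_cons]
  constructor
  · rintro ⟨h1 | h1, h2⟩
    · rcases Sym2.eq_iff.mp h1 with ⟨h, _⟩ | ⟨h, _⟩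
      · exact absurd h hva
      · exact absurd h hvb
    · exact ⟨h1, h2⟩
  · rintro ⟨h1, h2⟩
    exact ⟨Or.inr h1, h2⟩

lemma tcnt_cons [Fintype V] (M : SimpleGraph V) (a b : V) (hab : a ≠ b)
    (l : List (Sym2 V)) (hel : s(a,b) ∉ l) (v : V) :
    tcnt M (s(a,b) :: l) v = tcnt M l v
      + (if v = a ∨ v = b then sgnM M s(a,b) else 0) := by
  by_cases hva : v = a
  · subst hva
    unfold tcnt sgnM
    rw [cnt_cons_left (fun e => e ∉ M.edgeSet) v b hab l hel,
      cnt_cons_left (fun e => e ∈ M.edgeSet) v b hab l hel]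
    by_cases hm : s(v,b) ∈ M.edgeSet <;>
      · simp only [hm, if_pos, if_neg, not_true_eq_false, not_false_eq_true, if_true,
          if_false, true_or, eq_self_iff_true]
        push_cast
        ring
  · by_cases hvb : v = b
    · subst hvb
      rw [Sym2.eq_swap (a := a) (b := v)] at hel ⊢
      unfold tcnt sgnM
      rw [cnt_cons_left (fun e => e ∉ M.edgeSet) v a (Ne.symm hab) l hel,
        cnt_cons_left (fun e => e ∈ M.edgeSet) v a (Ne.symm hab) l hel]
      by_cases hm : s(v,a) ∈ M.edgeSet <;>
        · simp only [hm, not_true_eq_false, not_false_eq_true, if_true, if_false,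
            or_true, eq_self_iff_true]
          push_cast
          ring
    · unfold tcnt
      rw [cnt_cons_notmem (fun e => e ∉ M.edgeSet) a b v hva hvb l,
        cnt_cons_notmem (fun e => e ∈ M.edgeSet) a b v hva hvb l,
        if_neg (by tauto)]
      ring

lemma tcnt_nil (M : SimpleGraph V) (v : V) : tcnt M ([] : List (Sym2 V)) v = 0 := by
  unfold tcnt; simp

set_option linter.unnecessarySeqFocus false in
lemma alt_tcnt [Fintype V] {G M : SimpleGraph V} {u w : V} (p : G.Walk u w)
    (ht : p.edges.Nodup)
    (hc : p.edges.Chain' (fun a b => (a ∈ M.edgeSet ↔ b ∉ M.edgeSet)))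
    {e₀ e₁ : Sym2 V} (h0 : p.edges.head? = some e₀) (h1 : p.edges.getLast? = some e₁)
    (v : V) :
    tcnt M p.edges v
      = (if v = u then sgnM M e₀ else 0) + (if v = w then sgnM M e₁ else 0) := by
  induction p generalizing e₀ e₁ with
  | nil => simp at h0
  | @cons u x w h q ih =>
    rw [Walk.edges_cons] at ht hc h0 h1 ⊢
    have huxne : u ≠ x := G.ne_of_adj h
    obtain rfl : s(u, x) = e₀ := by simpa using h0
    rcases hq2 : q.edges with _ | ⟨f, l2⟩
    · -- base case : single edge
      have hxw : x = w := Walk.eq_of_length_eq_zero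
        (by rw [← Walk.length_edges, hq2]; rfl)
      subst hxw
      simp only [hq2] at h1 ⊢
      obtain rfl : s(u, x) = e₁ := by simpa using h1
      rw [tcnt_cons M u x huxne [] (by simp) v, tcnt_nil]
      by_cases h1 : v = u <;> by_cases h2 : v = x <;> simp_all
    · simp only [hq2] at ht hc h1 ⊢
      rw [List.nodup_cons] at ht
      have hf : s(u,x) ∉ f :: l2 := ht.1
      have hcc := List.isChain_cons.mp hc
      have hR : (s(u,x) ∈ M.edgeSet ↔ f ∉ M.edgeSet) := hcc.1 f rfl
      have hsgn : sgnM M f = - sgnM M s(u,x) := by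
        unfold sgnM
        by_cases hm : s(u,x) ∈ M.edgeSet <;>
          by_cases hm2 : f ∈ M.edgeSet <;> simp_all
      have h1q : q.edges.getLast? = some e₁ := by
        rw [hq2, ← List.getLast?_cons_cons (a := s(u,x))]; exact h1
      have ihq := ih (by rw [hq2]; exact ht.2) (by rw [hq2]; exact hcc.2)
        (e₀ := f) (by rw [hq2]; rfl) h1q
      rw [hq2] at ihq
      rw [tcnt_cons M u x huxne (f :: l2) hf v, ihq, hsgn]
      by_cases g1 : v = u <;> by_cases g2 : v = x <;> by_cases g3 : v = w <;>
        simp_all <;> ring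

lemma mdeg_symmdiff [Fintype V] {G : SimpleGraph V} (M : SimpleGraph V) {u w : V}
    (p : G.Walk u w) (v : V) :
    (mdeg (SimpleGraph.fromEdgeSet (symmDiff M.edgeSet {e | e ∈ p.edges})) v : ℤ)
      = (mdeg M v : ℤ) + tcnt M p.edges v := by
  set Cin : Set V := {x | s(v,x) ∈ p.edges ∧ s(v,x) ∈ M.edgeSet} with hCin
  set Cout : Set V := {x | s(v,x) ∈ p.edges ∧ s(v,x) ∉ M.edgeSet} with hCout
  have hCinA : Cin ⊆ M.neighborSet v := by
    intro x hx
    exact (SimpleGraph.mem_edgeSet M).mp hx.2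
  have hdisj : Disjoint (M.neighborSet v \ Cin) Cout := by
    rw [Set.disjoint_left]
    rintro x ⟨hxA, -⟩ hxC
    exact hxC.2 ((SimpleGraph.mem_edgeSet M).mpr hxA)
  have hset : (SimpleGraph.fromEdgeSet (symmDiff M.edgeSet {e | e ∈ p.edges})).neighborSet v
      = (M.neighborSet v \ Cin) ∪ Cout := by
    ext x
    simp only [mem_neighborSet, fromEdgeSet_adj, Set.mem_symmDiff, Set.mem_setOf_eq,
      Set.mem_union, Set.mem_diff, SimpleGraph.mem_edgeSet, hCin, hCout]
    constructor
    · rintro ⟨⟨hm, hnp⟩ | ⟨hp, hnm⟩, hvx⟩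
      · exact Or.inl ⟨hm, fun hc => hnp hc.1⟩
      · exact Or.inr ⟨hp, hnm⟩
    · rintro (⟨hA, hnc⟩ | ⟨hp, hnm⟩)
      · exact ⟨Or.inl ⟨hA, fun hp => hnc ⟨hp, hA⟩⟩, M.ne_of_adj hA⟩
      · exact ⟨Or.inr ⟨hp, hnm⟩, G.ne_of_adj (p.adj_of_mem_edges hp)⟩
  have hle : Cin.ncard ≤ (M.neighborSet v).ncard :=
    Set.ncard_le_ncard hCinA (Set.toFinite _)
  unfold mdeg
  rw [hset, Set.ncard_union_eq hdisj, Set.ncard_diff hCinA]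
  unfold tcnt
  rw [← hCin, ← hCout]
  push_cast [hle]
  ring

end AuxCounting

/-- Lemma 2.1: If `M` is a `k`-limited spanning subgraph with `σ(M) ≠ 0` and
`P` is an `M`-augmenting trail, then `M' = M Δ P` is again a `k`-limited spanning subgraph
of `G` and `σ(M') = σ(M) − 2`. -/
theorem augment_step [Fintype V] (G M M' : SimpleGraph V) (k : ℕ) (hk : 1 ≤ k)
    (hM : IsKLimitedSpanning G M k) (hσ : sigmaDef M k ≠ 0) {u w : V} (p : G.Walk u w)
    (hP : IsAugTrail G M k p)
    (hM' : M' = SimpleGraph.fromEdgeSet (symmDiff M.edgeSet {e | e ∈ p.edges})) :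
    IsKLimitedSpanning G M' k ∧ sigmaDef M' k = sigmaDef M k - 2 := by
  classical
  obtain ⟨⟨ht, halt⟩, hne, hhead, hlast, hu, hw, hfill, hclosed⟩ := hP
  -- alternation as a chain
  have hchain : p.edges.Chain' (fun a b => (a ∈ M.edgeSet ↔ b ∉ M.edgeSet)) := by
    apply List.isChain_iff_getElem.mpr
    intro i hi
    have := halt i (by omega)
    simpa [List.get_eq_getElem] using this
  have h0 : p.edges.head? = some (p.edges.head hne) := List.head?_eq_head hne
  have h1 : p.edges.getLast? = some (p.edges.getLast hne) := List.getLast?_eq_getLast hne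
  have hs0 : sgnM M (p.edges.head hne) = 1 := if_neg (hhead _ h0)
  have hs1 : sgnM M (p.edges.getLast hne) = 1 := if_neg (hlast _ h1)
  -- the key degree identity
  have key : ∀ v : V, (mdeg M' v : ℤ)
      = (mdeg M v : ℤ) + (if v = u then 1 else 0) + (if v = w then 1 else 0) := by
    intro v
    rw [hM', mdeg_symmdiff M p v,
      alt_tcnt p ht.edges_nodup hchain h0 h1 v, hs0, hs1]
    ring
  -- degree bound for M'
  have hbound : ∀ v : V, mdeg M' v ≤ k := by
    intro v
    by_cases h1v : v = u
    · subst h1v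
      by_cases h2v : v = w
      · subst h2v
        have hkv := key v
        have h2 := hclosed rfl
        simp only [if_pos rfl] at hkv
        omega
      · have hkv := key v
        simp only [if_pos rfl, if_neg h2v] at hkv
        omega
    · by_cases h2v : v = w
      · subst h2v
        have hkv := key v
        simp only [if_neg h1v, if_pos rfl] at hkv
        omega
      · have hkv := key v
        simp only [if_neg h1v, if_neg h2v] at hkv
        have := hM.2 v
        omega
  -- M' is a subgraph of G
  have hle : M' ≤ G := by
    rw [hM']
    intro a b hab
    rw [fromEdgeSet_adj] at hab
    rcases Set.mem_symmDiff.mp hab.1 with ⟨hm, -⟩ | ⟨hp', -⟩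
    · exact hM.1 ((SimpleGraph.mem_edgeSet M).mp hm)
    · exact p.adj_of_mem_edges hp'
  refine ⟨⟨hle, hbound⟩, ?_⟩
  -- sum of degrees increases by 2
  have hsum : ∑ v : V, (mdeg M' v : ℤ) = (∑ v : V, (mdeg M v : ℤ)) + 2 := by
    calc ∑ v : V, (mdeg M' v : ℤ)
        = ∑ v : V, ((mdeg M v : ℤ) + (if v = u then 1 else 0) + (if v = w then 1 else 0)) :=
          Finset.sum_congr rfl (fun v _ => key v)
      _ = (∑ v : V, (mdeg M v : ℤ)) + (∑ v : V, (if v = u then (1:ℤ) else 0))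
            + (∑ v : V, (if v = w then (1:ℤ) else 0)) := by
          rw [Finset.sum_add_distrib, Finset.sum_add_distrib]
      _ = (∑ v : V, (mdeg M v : ℤ)) + 2 := by
          rw [Finset.sum_ite_eq' Finset.univ u (fun _ => (1:ℤ)),
            Finset.sum_ite_eq' Finset.univ w (fun _ => (1:ℤ))]
          simp
          ring
  have hσ' : (sigmaDef M' k : ℤ) = k * Fintype.card V - ∑ v : V, (mdeg M' v : ℤ) := by
    unfold sigmaDef
    push_cast
    rw [Finset.sum_congr rfl (fun v _ => Nat.cast_sub (hbound v))]
    rw [Finset.sum_sub_distrib, Finset.sum_const, Finset.card_univ]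
    push_cast
    ring
  have hσM : (sigmaDef M k : ℤ) = k * Fintype.card V - ∑ v : V, (mdeg M v : ℤ) := by
    unfold sigmaDef
    push_cast
    rw [Finset.sum_congr rfl (fun v _ => Nat.cast_sub (hM.2 v))]
    rw [Finset.sum_sub_distrib, Finset.sum_const, Finset.card_univ]
    push_cast
    ring
  have hfinal : (sigmaDef M' k : ℤ) = (sigmaDef M k : ℤ) - 2 := by
    rw [hσ', hσM, hsum]
    ring
  omega
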